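/- Let n ∈ ℕ and let Q₁ be a quadratic form on ℚ^n that takes integer values on ℤ^n. Let μ₁ ∈ ℚ^n be such that the polar bilinear form B of Q₁ satisfies B(μ₁,λ) ∈ ℤ for all λ ∈ ℤ^n, and let m ∈ ℚ with m − Q₁(μ₁) ∈ ℤ. For a prime p and ν ∈ ℕ, let N be the number of triples (λ, x, y), where λ ∈ ℤ^n has all coordinates in {0,…,p^ν−1} and x, y ∈ {0,…,p^ν−1}, such that Q₁(λ+μ₁) + x·y − m is an integer divisible by p^ν. Then (1 − 1/p)·p^{(n+1)ν} ≤ N ≤ (ν+1)·p^{(n+1)ν}. -/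

import Mathlib

open Finset

lemma card_fin_multiples (p ν j : ℕ) (hp : 0 < p) (hj : j ≤ ν) :
    ((Finset.univ : Finset (Fin (p^ν))).filter fun x : Fin (p^ν) => p^j ∣ (x:ℕ)).card
      = p^(ν-j) := by
  have hpj : 0 < p^j := Nat.pow_pos hp
  have hsplit : p^j * p^(ν-j) = p^ν := by
    rw [← pow_add]; congr 1; omega
  rw [← Finset.card_fin (p^(ν-j))]
  refine Finset.card_bij' (fun x _ => (⟨(x:ℕ)/p^j, ?_⟩ : Fin (p^(ν-j))))
    (fun y _ => (⟨(y:ℕ)*p^j, ?_⟩ : Fin (p^ν))) ?_ ?_ ?_ ?_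
  · exact Nat.div_lt_of_lt_mul (by rw [hsplit]; exact x.isLt)
  · calc (y:ℕ)*p^j < p^(ν-j)*p^j := (Nat.mul_lt_mul_right hpj).2 y.isLt
      _ = p^ν := by rw [mul_comm]; exact hsplit
  · intro a ha; exact Finset.mem_univ _
  · intro a ha
    simp only [Finset.mem_filter, Finset.mem_univ, true_and]
    exact Dvd.intro_left _ rfl
  · intro a ha
    simp only [Finset.mem_filter, Finset.mem_univ, true_and] at ha
    apply Fin.ext
    simp [Nat.div_mul_cancel ha]
  · intro a ha
    apply Fin.ext
    simp [Nat.mul_div_cancel _ hpj]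

lemma fiber_card_le {p : ℕ} (hp : p.Prime) (ν j : ℕ) (hj : j ≤ ν) (c : ℤ) (x u : ℕ)
    (hxu : x = p^j * u) (hu : ¬ p ∣ u) :
    ((Finset.univ : Finset (Fin (p^ν))).filter
      fun y : Fin (p^ν) => (p:ℤ)^ν ∣ c + (x:ℤ) * ((y:ℕ):ℤ)).card ≤ p^j := by
  have hq' : 0 < p^(ν-j) := Nat.pow_pos hp.pos
  rw [← Finset.card_fin (p^j)]
  refine Finset.card_le_card_of_injOn (f := fun y => (⟨(y:ℕ)/p^(ν-j), by
    apply Nat.div_lt_of_lt_mul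
    have : p^(ν-j) * p^j = p^ν := by rw [← pow_add]; congr 1; omega
    rw [this]; exact y.isLt⟩ : Fin (p^j))) ?_ ?_
  · intro y _ ; exact Finset.mem_univ _
  · intro y hy y' hy' hdiv
    simp only [Finset.mem_coe, Finset.mem_filter, Finset.mem_univ, true_and] at hy hy'
    -- congruence mod p^(ν-j)
    have key : (y:ℕ) ≡ (y':ℕ) [MOD p^(ν-j)] := by
      have hdvd : (p:ℤ)^ν ∣ (x:ℤ) * ((y':ℕ) - (y:ℕ) : ℤ) := by
        have := dvd_sub hy' hy
        have e : (c + x * ((y':ℕ):ℤ)) - (c + x * ((y:ℕ):ℤ)) = (x:ℤ) * (((y':ℕ):ℤ) - (y:ℕ)) := by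
          ring
        rwa [e] at this
      have hx' : (x:ℤ) = (p:ℤ)^j * (u:ℤ) := by exact_mod_cast congrArg (Nat.cast : ℕ → ℤ) hxu
      rw [hx', mul_assoc] at hdvd
      have hsplit : (p:ℤ)^ν = (p:ℤ)^j * (p:ℤ)^(ν-j) := by rw [← pow_add]; congr 1; omega
      rw [hsplit] at hdvd
      have h2 : (p:ℤ)^(ν-j) ∣ (u:ℤ) * (((y':ℕ):ℤ) - (y:ℕ)) :=
        (mul_dvd_mul_iff_left (pow_ne_zero j (by exact_mod_cast hp.pos.ne' : (p:ℤ) ≠ 0))).1 hdvd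
      have hcop : IsCoprime ((p:ℤ)^(ν-j)) (u:ℤ) := by
        rw [Int.isCoprime_iff_gcd_eq_one]
        have : Nat.Coprime (p^(ν-j)) u :=
          Nat.Coprime.pow_left _ ((Nat.Prime.coprime_iff_not_dvd hp).2 hu)
        rw [← Nat.cast_pow, Int.gcd_natCast_natCast]
        exact this
      have h3 : (p:ℤ)^(ν-j) ∣ (((y':ℕ):ℤ) - (y:ℕ)) := hcop.dvd_of_dvd_mul_left h2
      rw [Nat.modEq_iff_dvd]
      exact_mod_cast h3
    -- equal quotients + congruence ⇒ equal
    have hq : (y:ℕ)/p^(ν-j) = (y':ℕ)/p^(ν-j) := by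
      simpa [Fin.ext_iff] using hdiv
    have hm : (y:ℕ) % p^(ν-j) = (y':ℕ) % p^(ν-j) := key
    apply Fin.ext
    rw [← Nat.div_add_mod (y:ℕ) (p^(ν-j)), ← Nat.div_add_mod (y':ℕ) (p^(ν-j)), hq, hm]

lemma pair_upper {p : ℕ} (hp : p.Prime) (ν : ℕ) (c : ℤ) :
    ((Finset.univ : Finset (Fin (p^ν) × Fin (p^ν))).filter
      fun t => (p:ℤ)^ν ∣ c + ((t.1:ℕ):ℤ) * ((t.2:ℕ):ℤ)).card ≤ (ν+1) * p^ν := by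
  classical
  set q := p^ν with hq
  -- split by first coordinate
  have hsplit : ((Finset.univ : Finset (Fin q × Fin q)).filter
      fun t => (p:ℤ)^ν ∣ c + ((t.1:ℕ):ℤ) * ((t.2:ℕ):ℤ)).card
      = ∑ x : Fin q, ((Finset.univ : Finset (Fin q)).filter
          fun y : Fin q => (p:ℤ)^ν ∣ c + ((x:ℕ):ℤ) * ((y:ℕ):ℤ)).card := by
    rw [Finset.card_eq_sum_card_fiberwise
      (f := Prod.fst) (t := Finset.univ) (fun x _ => Finset.mem_univ _)]
    apply Finset.sum_congr rfl
    intro x _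
    refine Finset.card_bij' (fun t _ => t.2) (fun y _ => (x, y)) ?hi ?hj ?left ?right
    case hi =>
      intro t ht
      simp only [Finset.mem_filter, Finset.mem_univ, true_and] at ht ⊢
      rw [← ht.2]; exact ht.1
    case hj =>
      intro y hy
      simp only [Finset.mem_filter, Finset.mem_univ, true_and] at hy ⊢
      exact ⟨hy, trivial⟩
    case left =>
      intro t ht
      simp only [Finset.mem_filter] at ht
      exact Prod.ext ht.2.symm rfl
    case right =>
      intro y hy; rfl
  rw [hsplit]
  -- define J
  set J : Fin q → ℕ := fun x => if (x:ℕ) = 0 then ν else min ν ((x:ℕ).factorization p) with hJ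
  have hJle : ∀ x, J x ≤ ν := by
    intro x; simp only [hJ]; split <;> simp
  have hJdvd : ∀ x : Fin q, p^(J x) ∣ (x:ℕ) := by
    intro x
    simp only [hJ]
    split
    · simp [*]
    · exact dvd_trans (pow_dvd_pow p (min_le_right _ _)) (Nat.ordProj_dvd _ _)
  have hfib : ∀ x : Fin q, ((Finset.univ : Finset (Fin q)).filter
      fun y : Fin q => (p:ℤ)^ν ∣ c + ((x:ℕ):ℤ) * ((y:ℕ):ℤ)).card ≤ p^(J x) := by
    intro x
    by_cases h0 : (x:ℕ) = 0
    · have : J x = ν := by simp [hJ, h0]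
      rw [this]
      calc _ ≤ (Finset.univ : Finset (Fin q)).card := Finset.card_filter_le _ _
        _ = p^ν := by simp [hq]
    · by_cases hbig : ν ≤ (x:ℕ).factorization p
      · have : J x = ν := by simp [hJ, h0, min_eq_left hbig]
        rw [this]
        calc _ ≤ (Finset.univ : Finset (Fin q)).card := Finset.card_filter_le _ _
          _ = p^ν := by simp [hq]
      · push_neg at hbig
        have hJx : J x = (x:ℕ).factorization p := by
          simp [hJ, h0, min_eq_right hbig.le]
        rw [hJx]
        exact fiber_card_le hp ν _ hbig.le c (x:ℕ) ((x:ℕ) / p^((x:ℕ).factorization p))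
          (Nat.ordProj_mul_ordCompl_eq_self (x:ℕ) p).symm (Nat.not_dvd_ordCompl hp h0)
  calc ∑ x : Fin q, ((Finset.univ : Finset (Fin q)).filter
          fun y : Fin q => (p:ℤ)^ν ∣ c + ((x:ℕ):ℤ) * ((y:ℕ):ℤ)).card
      ≤ ∑ x : Fin q, p^(J x) := Finset.sum_le_sum (fun x _ => hfib x)
    _ = ∑ j ∈ Finset.range (ν+1), ∑ x ∈ Finset.univ.filter (fun x => J x = j), p^(J x) := by
        rw [Finset.sum_fiberwise_of_maps_to (g := J)
          (fun x _ => Finset.mem_range.2 (Nat.lt_succ_of_le (hJle x)))]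
    _ ≤ ∑ j ∈ Finset.range (ν+1), p^ν := by
        apply Finset.sum_le_sum
        intro j hj
        have hjν : j ≤ ν := Nat.lt_succ_iff.1 (Finset.mem_range.1 hj)
        have : ∑ x ∈ Finset.univ.filter (fun x => J x = j), p^(J x)
            = (Finset.univ.filter (fun x : Fin q => J x = j)).card * p^j := by
          rw [Finset.sum_congr rfl (fun x hx => by
            rw [(Finset.mem_filter.1 hx).2]), Finset.sum_const, smul_eq_mul]
        rw [this]
        have hsub : (Finset.univ.filter (fun x : Fin q => J x = j)).card
            ≤ p^(ν-j) := by
          rw [← card_fin_multiples p ν j hp.pos hjν]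
          apply Finset.card_le_card
          intro x hx
          simp only [Finset.mem_filter, Finset.mem_univ, true_and] at hx ⊢
          rw [← hx]; exact hJdvd x
        calc (Finset.univ.filter (fun x : Fin q => J x = j)).card * p^j
            ≤ p^(ν-j) * p^j := Nat.mul_le_mul_right _ hsub
          _ = p^ν := by rw [← pow_add]; congr 1; omega
    _ = (ν+1) * p^ν := by rw [Finset.sum_const, Finset.card_range, smul_eq_mul]

lemma pair_lower {p : ℕ} (hp : p.Prime) (ν : ℕ) (c : ℤ) :
    (p^ν).totient ≤ ((Finset.univ : Finset (Fin (p^ν) × Fin (p^ν))).filter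
      fun t => (p:ℤ)^ν ∣ c + ((t.1:ℕ):ℤ) * ((t.2:ℕ):ℤ)).card := by
  classical
  haveI : NeZero (p^ν) := ⟨pow_ne_zero _ hp.pos.ne'⟩
  have hq0 : 0 < p^ν := Nat.pow_pos hp.pos
  rw [Nat.totient_eq_card_coprime]
  have key : ∀ x : ℕ, x < p^ν → Nat.Coprime (p^ν) x →
      ∃ y : Fin (p^ν), (p:ℤ)^ν ∣ c + (x:ℤ) * ((y:ℕ):ℤ) := by
    intro x hx hco
    set q := p^ν with hq
    let u : (ZMod q)ˣ := ZMod.unitOfCoprime x hco.symm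
    refine ⟨⟨(((u⁻¹ : (ZMod q)ˣ) : ZMod q) * ((-c : ℤ) : ZMod q)).val, ZMod.val_lt _⟩, ?_⟩
    have h0 : ((c + (x:ℤ) * (((((u⁻¹ : (ZMod q)ˣ) : ZMod q) * ((-c : ℤ) : ZMod q)).val : ℕ) : ℤ) : ℤ) : ZMod q) = 0 := by
      push_cast
      rw [ZMod.natCast_val, ZMod.cast_id]
      have hxu : ((x : ℕ) : ZMod q) = (u : ZMod q) := (ZMod.coe_unitOfCoprime x hco.symm).symm
      rw [hxu, Units.mul_inv_cancel_left]
      push_cast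
      ring
    have h1 := (ZMod.intCast_zmod_eq_zero_iff_dvd _ q).1 h0
    have h2 : ((q:ℕ):ℤ) = (p:ℤ)^ν := by rw [hq]; push_cast; ring
    rw [h2] at h1
    exact h1
  set f : ℕ → Fin (p^ν) × Fin (p^ν) := fun x =>
    if h : x < p^ν ∧ Nat.Coprime (p^ν) x then
      (⟨x, h.1⟩, Classical.choose (key x h.1 h.2))
    else (⟨0, hq0⟩, ⟨0, hq0⟩) with hf
  apply Finset.card_le_card_of_injOn f
  · intro x hx
    simp only [Finset.mem_coe, Finset.mem_filter, Finset.mem_range] at hx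
    simp only [hf, dif_pos hx, Finset.mem_coe, Finset.mem_filter, Finset.mem_univ, true_and]
    exact Classical.choose_spec (key x hx.1 hx.2)
  · intro a ha b hb hab
    simp only [Finset.coe_filter, Finset.mem_range, Set.mem_setOf_eq] at ha hb
    simp only [hf, dif_pos ha, dif_pos hb, Prod.ext_iff, Fin.ext_iff] at hab
    exact hab.1

lemma totient_rat_bound {p : ℕ} (hp : p.Prime) (ν : ℕ) :
    (1 - 1/(p:ℚ)) * (p:ℚ)^ν ≤ ((p^ν).totient : ℚ) := by
  have hp1 : (1:ℚ) ≤ p := by exact_mod_cast hp.one_lt.le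
  have hp0 : (0:ℚ) < p := lt_of_lt_of_le one_pos hp1
  cases ν with
  | zero =>
    simp only [pow_zero, mul_one, Nat.totient_one, Nat.cast_one]
    have : 0 < 1/(p:ℚ) := by positivity
    linarith
  | succ k =>
    rw [Nat.totient_prime_pow hp (Nat.succ_pos k)]
    have hcast : ((p ^ (k + 1 - 1) * (p - 1) : ℕ) : ℚ) = (p:ℚ)^k * ((p:ℚ) - 1) := by
      push_cast [Nat.cast_sub hp.one_lt.le]
      ring
    rw [hcast]
    have heq : (1 - 1/(p:ℚ)) * (p:ℚ)^(k+1) = (p:ℚ)^k * ((p:ℚ) - 1) := by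
      field_simp
      ring
    rw [heq]

lemma card_subtype_prod {α β : Type*} [Fintype α] [Fintype β] (P : α → β → Prop) :
    Nat.card {t : α × β // P t.1 t.2} = ∑ a : α, Nat.card {b : β // P a b} := by
  classical
  rw [Nat.card_congr (Equiv.subtypeProdEquivSigmaSubtype P), Nat.card_eq_fintype_card,
    Fintype.card_sigma]
  simp [Nat.card_eq_fintype_card]

/-- Representation number bounds for a lattice splitting off one hyperbolic plane:
if `Q₁` is an integral quadratic form on `ℤⁿ`, `μ₁` a dual vector and `m ≡ Q₁(μ₁) (mod ℤ)`,
then the number `N` of residues `(λ,x,y)` mod `p^ν` with `Q₁(λ+μ₁) + xy ≡ m (mod p^ν)`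
satisfies `(1-1/p) p^{(n+1)ν} ≤ N ≤ (ν+1) p^{(n+1)ν}`. -/
theorem repNumber_splits_one_hyperbolic_plane_bounds
    (n : ℕ) (Q₁ : QuadraticForm ℚ (Fin n → ℚ))
    (hQint : ∀ v : Fin n → ℤ, ∃ z : ℤ, Q₁ (fun i => (v i : ℚ)) = (z : ℚ))
    (μ₁ : Fin n → ℚ)
    (hμint : ∀ v : Fin n → ℤ, ∃ z : ℤ,
      QuadraticMap.polar Q₁ μ₁ (fun i => (v i : ℚ)) = (z : ℚ))
    (m : ℚ) (hm : ∃ z : ℤ, m - Q₁ μ₁ = (z : ℚ))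
    (p : ℕ) (hp : p.Prime) (ν : ℕ) :
    (1 - 1 / (p : ℚ)) * (p : ℚ) ^ ((n + 1) * ν) ≤
      (Nat.card {t : (Fin n → Fin (p ^ ν)) × Fin (p ^ ν) × Fin (p ^ ν) //
        ∃ z : ℤ, Q₁ (fun i => (t.1 i : ℚ) + μ₁ i) + (t.2.1 : ℚ) * (t.2.2 : ℚ) - m = (z : ℚ)
          ∧ (p : ℤ) ^ ν ∣ z} : ℚ) ∧
    (Nat.card {t : (Fin n → Fin (p ^ ν)) × Fin (p ^ ν) × Fin (p ^ ν) //
        ∃ z : ℤ, Q₁ (fun i => (t.1 i : ℚ) + μ₁ i) + (t.2.1 : ℚ) * (t.2.2 : ℚ) - m = (z : ℚ)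
          ∧ (p : ℤ) ^ ν ∣ z} : ℚ)
      ≤ (ν + 1) * (p : ℚ) ^ ((n + 1) * ν) := by
  classical
  -- the integer constant attached to each lambda
  have hc : ∀ lam : Fin n → Fin (p^ν), ∃ cl : ℤ,
      Q₁ (fun i => ((lam i : ℚ)) + μ₁ i) - m = (cl : ℚ) := by
    intro lam
    set v : Fin n → ℚ := fun i => ((lam i : ℚ)) with hv
    obtain ⟨z1, hz1⟩ := hQint (fun i => ((lam i : ℕ) : ℤ))
    obtain ⟨z2, hz2⟩ := hμint (fun i => ((lam i : ℕ) : ℤ))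
    obtain ⟨z3, hz3⟩ := hm
    have hvv : (fun i => ((((lam i : ℕ) : ℤ)) : ℚ)) = v := by
      funext i; push_cast; rfl
    rw [hvv] at hz1 hz2
    refine ⟨z2 + z1 - z3, ?_⟩
    have e1 : (fun i => v i + μ₁ i) = μ₁ + v := by
      funext i; simp [Pi.add_apply, add_comm]
    rw [e1]
    rw [QuadraticMap.polar] at hz2
    push_cast
    linarith
  choose cf hcf using hc
  -- the predicate
  set P : (Fin n → Fin (p^ν)) → (Fin (p^ν) × Fin (p^ν)) → Prop := fun lam s =>
    ∃ z : ℤ, Q₁ (fun i => ((lam i : ℚ)) + μ₁ i) + (s.1 : ℚ) * (s.2 : ℚ) - m = (z : ℚ)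
      ∧ (p : ℤ) ^ ν ∣ z with hP
  have hNcard : Nat.card {t : (Fin n → Fin (p ^ ν)) × Fin (p ^ ν) × Fin (p ^ ν) //
        ∃ z : ℤ, Q₁ (fun i => (t.1 i : ℚ) + μ₁ i) + (t.2.1 : ℚ) * (t.2.2 : ℚ) - m = (z : ℚ)
          ∧ (p : ℤ) ^ ν ∣ z}
      = ∑ lam : Fin n → Fin (p^ν), Nat.card {s : Fin (p^ν) × Fin (p^ν) // P lam s} :=
    card_subtype_prod P
  -- rewrite each inner count as a filter card
  have hPiff : ∀ lam : Fin n → Fin (p^ν), ∀ s : Fin (p^ν) × Fin (p^ν),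
      P lam s ↔ (p:ℤ)^ν ∣ cf lam + ((s.1:ℕ):ℤ) * ((s.2:ℕ):ℤ) := by
    intro lam s
    constructor
    · rintro ⟨z, hz, hdvd⟩
      have : (z : ℚ) = ((cf lam + ((s.1:ℕ):ℤ) * ((s.2:ℕ):ℤ) : ℤ) : ℚ) := by
        push_cast
        rw [← hz]
        have := hcf lam
        push_cast at this ⊢
        linarith
      have hz' : z = cf lam + ((s.1:ℕ):ℤ) * ((s.2:ℕ):ℤ) := by exact_mod_cast this
      rwa [hz'] at hdvd
    · intro hdvd
      refine ⟨cf lam + ((s.1:ℕ):ℤ) * ((s.2:ℕ):ℤ), ?_, hdvd⟩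
      have := hcf lam
      push_cast at this ⊢
      linarith
  have hcount : ∀ lam : Fin n → Fin (p^ν),
      Nat.card {s : Fin (p^ν) × Fin (p^ν) // P lam s}
        = ((Finset.univ : Finset (Fin (p^ν) × Fin (p^ν))).filter
            fun t => (p:ℤ)^ν ∣ cf lam + ((t.1:ℕ):ℤ) * ((t.2:ℕ):ℤ)).card := by
    intro lam
    rw [Nat.card_congr (Equiv.subtypeEquivRight (hPiff lam)), Nat.card_eq_fintype_card,
      Fintype.card_subtype]
  -- natural number bounds
  have hNl : (p^ν)^n * (p^ν).totient ≤
      ∑ lam : Fin n → Fin (p^ν), Nat.card {s : Fin (p^ν) × Fin (p^ν) // P lam s} := by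
    calc (p^ν)^n * (p^ν).totient
        = ∑ _lam : Fin n → Fin (p^ν), (p^ν).totient := by
          rw [Finset.sum_const, smul_eq_mul, Finset.card_univ]
          congr 1
          simp [Fintype.card_fun]
      _ ≤ _ := by
          apply Finset.sum_le_sum
          intro lam _
          rw [hcount lam]
          exact pair_lower hp ν (cf lam)
  have hNu : (∑ lam : Fin n → Fin (p^ν), Nat.card {s : Fin (p^ν) × Fin (p^ν) // P lam s})
      ≤ (p^ν)^n * ((ν+1) * p^ν) := by
    calc (∑ lam : Fin n → Fin (p^ν), Nat.card {s : Fin (p^ν) × Fin (p^ν) // P lam s})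
        ≤ ∑ _lam : Fin n → Fin (p^ν), (ν+1) * p^ν := by
          apply Finset.sum_le_sum
          intro lam _
          rw [hcount lam]
          exact pair_upper hp ν (cf lam)
      _ = (p^ν)^n * ((ν+1) * p^ν) := by
          rw [Finset.sum_const, smul_eq_mul, Finset.card_univ]
          congr 1
          simp [Fintype.card_fun]
  rw [hNcard]
  have hpow : (p:ℚ)^((n+1)*ν) = (p:ℚ)^ν * ((p:ℚ)^ν)^n := by
    rw [← pow_mul, ← pow_add]
    congr 1
    ring
  constructor
  · calc (1 - 1/(p:ℚ)) * (p:ℚ)^((n+1)*ν)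
        = ((1 - 1/(p:ℚ)) * (p:ℚ)^ν) * ((p:ℚ)^ν)^n := by rw [hpow]; ring
      _ ≤ ((p^ν).totient : ℚ) * ((p:ℚ)^ν)^n := by
          apply mul_le_mul_of_nonneg_right (totient_rat_bound hp ν)
          positivity
      _ = (((p^ν)^n * (p^ν).totient : ℕ) : ℚ) := by push_cast; ring
      _ ≤ _ := by exact_mod_cast hNl
  · calc ((∑ lam : Fin n → Fin (p^ν),
          Nat.card {s : Fin (p^ν) × Fin (p^ν) // P lam s} : ℕ) : ℚ)
        ≤ (((p^ν)^n * ((ν+1) * p^ν) : ℕ) : ℚ) := by exact_mod_cast hNu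
      _ = ((ν:ℚ)+1) * (p:ℚ)^((n+1)*ν) := by push_cast; rw [hpow]; ring
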